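/- Let a > 0 and let F, G : ℝ → ℝ satisfy F''(v) = f(v)·cos(av), G''(v) = (1/a)·f(v)·sin(av) for a continuous f, with F(0)=F'(0)=G(0)=G'(0)=0. Define x(u,v) = (u·cos(av) + F(v), v, (u/a)·sin(av) + G(v)), e₁(v) = (cos(av), 0, (1/a)sin(av)), e₃(v) = (−a·sin(av), 0, cos(av)), e₂(u,v) = u·e₃(v) + (F'(v), 1, G'(v)). Then ∂x/∂u = e₁, ∂x/∂v = e₂, ∂e₁/∂v = e₃, ∂e₂/∂u = e₃, ∂e₂/∂v = (−u·a² + f(v))·e₁, ∂e₃/∂v = −a²·e₁, and det[e₁ e₂ e₃] = 1. -/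

import Mathlib

private lemma cos_av (a v : ℝ) :
    HasDerivAt (fun v' => Real.cos (a * v')) (-(a * Real.sin (a * v))) v := by
  have := (Real.hasDerivAt_cos (a * v)).comp v ((hasDerivAt_id v).const_mul a)
  simpa [mul_comm, Function.comp_def] using this

private lemma sin_av (a v : ℝ) :
    HasDerivAt (fun v' => Real.sin (a * v')) (a * Real.cos (a * v)) v := by
  have := (Real.hasDerivAt_sin (a * v)).comp v ((hasDerivAt_id v).const_mul a)
  simpa [mul_comm, Function.comp_def] using this

/-- The explicit parametrization (5.3) with ℓ(v) = −a² < 0 solves the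
structure system (4.4) and the frame is unimodular. -/
theorem ell_negative_example_solves_system
    (a : ℝ) (ha : 0 < a) (f F G F' G' : ℝ → ℝ) (hf : Continuous f)
    (hF : ∀ v, HasDerivAt F (F' v) v)
    (hF' : ∀ v, HasDerivAt F' (f v * Real.cos (a * v)) v)
    (hG : ∀ v, HasDerivAt G (G' v) v)
    (hG' : ∀ v, HasDerivAt G' ((1 / a) * f v * Real.sin (a * v)) v)
    (hF0 : F 0 = 0) (hF'0 : F' 0 = 0) (hG0 : G 0 = 0) (hG'0 : G' 0 = 0)
    (x : ℝ → ℝ → (Fin 3 → ℝ)) (e₁ e₃ : ℝ → (Fin 3 → ℝ))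
    (e₂ : ℝ → ℝ → (Fin 3 → ℝ))
    (hxdef : ∀ u v, x u v =
      ![u * Real.cos (a * v) + F v, v, (u / a) * Real.sin (a * v) + G v])
    (he₁def : ∀ v, e₁ v = ![Real.cos (a * v), 0, (1 / a) * Real.sin (a * v)])
    (he₃def : ∀ v, e₃ v = ![-a * Real.sin (a * v), 0, Real.cos (a * v)])
    (he₂def : ∀ u v, e₂ u v = u • e₃ v + ![F' v, 1, G' v]) :
    (∀ u v, HasDerivAt (fun u' => x u' v) (e₁ v) u) ∧
    (∀ u v, HasDerivAt (fun v' => x u v') (e₂ u v) v) ∧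
    (∀ v, HasDerivAt e₁ (e₃ v) v) ∧
    (∀ u v, HasDerivAt (fun u' => e₂ u' v) (e₃ v) u) ∧
    (∀ u v, HasDerivAt (fun v' => e₂ u v') ((-u * a ^ 2 + f v) • e₁ v) v) ∧
    (∀ v, HasDerivAt e₃ ((-a ^ 2) • e₁ v) v) ∧
    (∀ u v, (Matrix.of fun i j => ![e₁ v, e₂ u v, e₃ v] j i).det = 1) := by
  have ha0 : a ≠ 0 := ne_of_gt ha
  refine ⟨?_, ?_, ?_, ?_, ?_, ?_, ?_⟩
  · intro u v
    rw [hasDerivAt_pi]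
    intro i
    fin_cases i <;>
      simp only [hxdef, he₁def, Matrix.cons_val_zero, Matrix.cons_val_one,
        Matrix.head_cons, Matrix.cons_val_two, Matrix.tail_cons, Fin.isValue]
    · have := ((hasDerivAt_id u).mul_const (Real.cos (a * v))).add_const (F v)
      simpa using this
    · exact hasDerivAt_const _ _
    · have := (((hasDerivAt_id u).div_const a).mul_const (Real.sin (a * v))).add_const (G v)
      refine this.congr_deriv ?_ <;> simp [Matrix.cons_val] <;> field_simp
  · intro u v
    rw [hasDerivAt_pi]
    intro i
    fin_cases i <;>
      simp only [hxdef, he₂def, he₃def, Matrix.cons_val_zero, Matrix.cons_val_one,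
        Matrix.head_cons, Matrix.cons_val_two, Matrix.tail_cons, Pi.add_apply,
        Pi.smul_apply, smul_eq_mul, Fin.isValue]
    · have := ((cos_av a v).const_mul u).add (hF v)
      refine this.congr_deriv ?_ <;> simp [Matrix.cons_val] <;> try ring
    · exact (hasDerivAt_id v).congr_deriv (by simp [Matrix.cons_val])
    · have := ((sin_av a v).const_mul (u / a)).add (hG v)
      refine this.congr_deriv ?_ <;> simp [Matrix.cons_val] <;> field_simp <;> try ring
  · intro v
    rw [hasDerivAt_pi]
    intro i
    fin_cases i <;>
      simp only [he₁def, he₃def, Matrix.cons_val_zero, Matrix.cons_val_one,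
        Matrix.head_cons, Matrix.cons_val_two, Matrix.tail_cons, Fin.isValue]
    · have := cos_av a v
      refine this.congr_deriv ?_ <;> simp [Matrix.cons_val] <;> try ring
    · exact hasDerivAt_const _ _
    · have := (sin_av a v).const_mul (1 / a)
      refine this.congr_deriv ?_ <;> simp [Matrix.cons_val] <;> field_simp
  · intro u v
    rw [hasDerivAt_pi]
    intro i
    fin_cases i <;>
      simp only [he₂def, he₃def, Matrix.cons_val_zero, Matrix.cons_val_one,
        Matrix.head_cons, Matrix.cons_val_two, Matrix.tail_cons, Pi.add_apply,
        Pi.smul_apply, smul_eq_mul, Fin.isValue]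
    · have := ((hasDerivAt_id u).mul_const (-a * Real.sin (a * v))).add_const (F' v)
      simpa using this
    · have := ((hasDerivAt_id u).mul_const (0 : ℝ)).add_const (1 : ℝ)
      simpa using this
    · have := ((hasDerivAt_id u).mul_const (Real.cos (a * v))).add_const (G' v)
      simpa using this
  · intro u v
    rw [hasDerivAt_pi]
    intro i
    fin_cases i <;>
      simp only [he₂def, he₃def, he₁def, Matrix.cons_val_zero, Matrix.cons_val_one,
        Matrix.head_cons, Matrix.cons_val_two, Matrix.tail_cons, Pi.add_apply,
        Pi.smul_apply, smul_eq_mul, Fin.isValue]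
    · have := (((sin_av a v).const_mul (-a)).const_mul u).add (hF' v)
      refine this.congr_deriv ?_ <;> simp [Matrix.cons_val] <;> try ring
    · have h : HasDerivAt (fun v' : ℝ => u * (0:ℝ) + 1) 0 v := hasDerivAt_const _ _
      exact h.congr_deriv (by simp [Matrix.cons_val])
    · have := ((cos_av a v).const_mul u).add (hG' v)
      refine this.congr_deriv ?_ <;> simp [Matrix.cons_val] <;> field_simp <;> try ring
  · intro v
    rw [hasDerivAt_pi]
    intro i
    fin_cases i <;>
      simp only [he₁def, he₃def, Matrix.cons_val_zero, Matrix.cons_val_one,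
        Matrix.head_cons, Matrix.cons_val_two, Matrix.tail_cons, Pi.smul_apply,
        smul_eq_mul, Fin.isValue]
    · have := (sin_av a v).const_mul (-a)
      refine this.congr_deriv ?_ <;> simp [Matrix.cons_val] <;> try ring
    · have h : HasDerivAt (fun _ : ℝ => (0:ℝ)) 0 v := hasDerivAt_const _ _
      exact h.congr_deriv (by simp [Matrix.cons_val])
    · have := cos_av a v
      refine this.congr_deriv ?_ <;> simp [Matrix.cons_val] <;> field_simp <;> try ring
  · intro u v
    simp only [he₁def, he₂def, he₃def]
    rw [Matrix.det_fin_three]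
    simp only [Matrix.of_apply, Matrix.cons_val_zero, Matrix.cons_val_one,
      Matrix.head_cons, Matrix.cons_val_two, Matrix.tail_cons, Pi.add_apply,
      Pi.smul_apply, smul_eq_mul, Fin.isValue]
    have hpyth := Real.sin_sq_add_cos_sq (a * v)
    field_simp
    nlinarith [hpyth]
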